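/- Let X be a finite-dimensional normed space of dimension ≥ 2 and C ⊆ X an unbounded convex body with no asymptotic directions. Then for each z ∈ X \ C, the set Γ_C(z) = C ∩ ∂[c(z,C)] is nonempty and bounded. -/

import Mathlib

/-- `v` is an asymptotic direction of the closed convex set `C`. -/
def IsAsymptoticDir {X : Type*} [NormedAddCommGroup X] [NormedSpace ℝ X]
    (C : Set X) (v : X) : Prop :=
  v ≠ 0 ∧ ∃ x₀ : X,
    (∀ t : ℝ, 0 ≤ t → x₀ + t • v ∉ interior C) ∧
    Filter.Tendsto (fun t : ℝ => Metric.infDist (x₀ + t • v) C) Filter.atTop (nhds 0)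

/-- The cone with vertex `z` generated by `E`: `z + ℝ₊ · (E - z)`. -/
def vertexCone {X : Type*} [NormedAddCommGroup X] [NormedSpace ℝ X]
    (z : X) (E : Set X) : Set X :=
  {x : X | ∃ t : ℝ, 0 ≤ t ∧ ∃ c ∈ E, x = z + t • (c - z)}

open Filter Metric Set Topology

section Aux

variable {X : Type*} [NormedAddCommGroup X] [NormedSpace ℝ X]

/-- Lemma A: with no asymptotic directions, every ray in a recession direction
enters the interior of `C`. -/
lemma lemA (C : Set X)
    (hnoasym : ∀ v : X, ¬ IsAsymptoticDir C v)
    {v : X} (hv : v ≠ 0) (hrec : ∀ c ∈ C, ∀ t : ℝ, 0 ≤ t → c + t • v ∈ C)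
    {a : X} (ha : a ∈ interior C) (x : X) :
    ∃ t : ℝ, 0 ≤ t ∧ x + t • v ∈ interior C := by
  by_contra hcon
  push_neg at hcon
  set W : Set X := {y | ∃ t : ℝ, 0 ≤ t ∧ y + t • v ∈ interior C} with hWdef
  have hWopen : IsOpen W := by
    have : W = ⋃ t ∈ {t : ℝ | 0 ≤ t}, (fun y => y + t • v) ⁻¹' interior C := by
      ext y
      simp only [hWdef, mem_setOf_eq, mem_iUnion, mem_preimage, exists_prop]
    rw [this]
    exact isOpen_biUnion fun t _ =>
      isOpen_interior.preimage (continuous_id.add continuous_const)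
  have haW : a ∈ W := ⟨0, le_refl 0, by simpa using ha⟩
  have hxW : x ∉ W := fun ⟨t, ht, hmem⟩ => hcon t ht hmem
  -- the segment from a to x crosses out of W; take the sSup
  set f : ℝ → X := fun s => a + s • (x - a) with hfdef
  have hfcont : Continuous f := by fun_prop
  set S : Set ℝ := {s | s ∈ Icc (0:ℝ) 1 ∧ f s ∈ W} with hSdef
  have hS0 : (0:ℝ) ∈ S := ⟨⟨le_refl 0, zero_le_one⟩, by simpa [hfdef] using haW⟩
  have hSne : S.Nonempty := ⟨0, hS0⟩
  have hSbdd : BddAbove S := ⟨1, fun s hs => hs.1.2⟩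
  set s₀ : ℝ := sSup S with hs₀def
  have hs₀mem : s₀ ∈ Icc (0:ℝ) 1 := ⟨le_csSup hSbdd hS0, csSup_le hSne fun s hs => hs.1.2⟩
  set x₀ : X := f s₀ with hx₀def
  have hx₀cl : x₀ ∈ closure W := by
    have h1 : s₀ ∈ closure S := csSup_mem_closure hSne hSbdd
    have h2 : f s₀ ∈ f '' closure S := mem_image_of_mem f h1
    have h3 : f '' closure S ⊆ closure (f '' S) := image_closure_subset_closure_image hfcont
    have h4 : f '' S ⊆ W := by rintro _ ⟨s, hs, rfl⟩; exact hs.2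
    exact closure_mono h4 (h3 h2)
  have hx₀W : x₀ ∉ W := by
    intro hmem
    have hev : ∀ᶠ s in nhds s₀, f s ∈ W := hfcont.continuousAt (hWopen.mem_nhds hmem)
    rcases Metric.eventually_nhds_iff.1 hev with ⟨δ, hδ, hball⟩
    rcases lt_or_eq_of_le hs₀mem.2 with h1 | h1
    · set s₁ : ℝ := min 1 (s₀ + δ / 2) with hs₁def
      have hs₁gt : s₀ < s₁ := lt_min h1 (by linarith)
      have hs₁mem : s₁ ∈ S := by
        refine ⟨⟨le_trans hs₀mem.1 hs₁gt.le, min_le_left _ _⟩, ?_⟩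
        apply hball
        rw [Real.dist_eq, abs_of_nonneg (by linarith)]
        have : s₁ ≤ s₀ + δ / 2 := min_le_right _ _
        linarith
      exact absurd (le_csSup hSbdd hs₁mem) (not_le.2 hs₁gt)
    · apply hxW
      have : f 1 = x := by simp [hfdef]
      rw [← this, ← h1]; exact hmem
  -- x₀ witnesses an asymptotic direction
  apply hnoasym v
  refine ⟨hv, x₀, fun t ht hmem => hx₀W ⟨t, ht, hmem⟩, ?_⟩
  have hCne : C.Nonempty := ⟨a, interior_subset ha⟩
  have hmono : ∀ t₁ t₂ : ℝ, t₁ ≤ t₂ →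
      infDist (x₀ + t₂ • v) C ≤ infDist (x₀ + t₁ • v) C := by
    intro t₁ t₂ h12
    have himg : (fun c => c + (t₂ - t₁) • v) '' C ⊆ C := by
      rintro _ ⟨c, hc, rfl⟩; exact hrec c hc _ (by linarith)
    have h3 : x₀ + t₂ • v = (x₀ + t₁ • v) + (t₂ - t₁) • v := by module
    calc infDist (x₀ + t₂ • v) C
        = infDist ((x₀ + t₁ • v) + (t₂ - t₁) • v) C := by rw [h3]
      _ ≤ infDist ((x₀ + t₁ • v) + (t₂ - t₁) • v) ((fun c => c + (t₂ - t₁) • v) '' C) :=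
          infDist_le_infDist_of_subset himg (hCne.image _)
      _ = infDist (x₀ + t₁ • v) C := infDist_image (isometry_add_right ((t₂ - t₁) • v))
  rw [Metric.tendsto_atTop]
  intro ε hε
  rcases Metric.mem_closure_iff.1 hx₀cl ε hε with ⟨y, hyW, hyd⟩
  rcases hyW with ⟨t₀, ht₀, hyint⟩
  refine ⟨t₀, fun t htt => ?_⟩
  have hle : infDist (x₀ + t • v) C ≤ dist x₀ y := by
    calc infDist (x₀ + t • v) C ≤ infDist (x₀ + t₀ • v) C := hmono t₀ t htt
    _ ≤ dist (x₀ + t₀ • v) (y + t₀ • v) := infDist_le_dist_of_mem (interior_subset hyint)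
    _ = dist x₀ y := by rw [dist_add_right]
  rw [Real.dist_eq, sub_zero, abs_of_nonneg infDist_nonneg]
  exact lt_of_le_of_lt hle hyd

/-- From an unbounded sequence in a closed convex set, extract a unit recession
direction which is the limit of the directions from `z`. -/
lemma recOfUnbounded [FiniteDimensional ℝ X] (C : Set X) (hclosed : IsClosed C)
    (hconv : Convex ℝ C) (z : X) (c : ℕ → X) (hc : ∀ n, c n ∈ C)
    (hnorm : Tendsto (fun n => ‖c n - z‖) atTop atTop) :
    ∃ v : X, ‖v‖ = 1 ∧ (∀ p ∈ C, ∀ t : ℝ, 0 ≤ t → p + t • v ∈ C) ∧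
      ∃ φ : ℕ → ℕ, StrictMono φ ∧
        Tendsto (fun n => ‖c (φ n) - z‖⁻¹ • (c (φ n) - z)) atTop (𝓝 v) := by
  set u : ℕ → X := fun n => ‖c n - z‖⁻¹ • (c n - z) with hudef
  have hev : ∀ᶠ n in atTop, u n ∈ sphere (0:X) 1 := by
    filter_upwards [hnorm.eventually_ge_atTop 1] with n hn
    have hpos : (0:ℝ) < ‖c n - z‖ := lt_of_lt_of_le one_pos hn
    simp only [hudef, mem_sphere_iff_norm, sub_zero, norm_smul, norm_inv, norm_norm]
    rw [inv_mul_cancel₀ (ne_of_gt hpos)]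
  obtain ⟨v, hvs, φ, hφ, hφt⟩ :=
    (isCompact_sphere (0:X) 1).tendsto_subseq' (hev.frequently)
  have hv1 : ‖v‖ = 1 := by simpa [mem_sphere_iff_norm] using hvs
  refine ⟨v, hv1, ?_, φ, hφ, hφt⟩
  intro p hp t ht
  -- directions measured from p also converge to v
  have hφnorm : Tendsto (fun n => ‖c (φ n) - z‖) atTop atTop :=
    hnorm.comp hφ.tendsto_atTop
  have hinv : Tendsto (fun n => ‖c (φ n) - z‖⁻¹) atTop (𝓝 0) :=
    hφnorm.inv_tendsto_atTop
  have hw : Tendsto (fun n => u (φ n) + ‖c (φ n) - z‖⁻¹ • (z - p)) atTop (𝓝 v) := by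
    have : Tendsto (fun n => ‖c (φ n) - z‖⁻¹ • (z - p)) atTop (𝓝 ((0:ℝ) • (z - p))) :=
      hinv.smul tendsto_const_nhds
    simpa using hφt.add this
  set g : X → X := fun a => ‖a‖⁻¹ • a with hgdef
  have hgcont : ContinuousAt g v := by
    apply ContinuousAt.smul
    · exact (continuous_norm.continuousAt).inv₀ (by rw [hv1]; norm_num)
    · exact continuousAt_id
  have hgv : g v = v := by rw [hgdef]; simp [hv1]
  have hkey : Tendsto (fun n => g (u (φ n) + ‖c (φ n) - z‖⁻¹ • (z - p))) atTop (𝓝 v) := by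
    rw [← hgv]; exact hgcont.tendsto.comp hw
  -- identify with directions from p
  have hid : ∀ᶠ n in atTop, g (u (φ n) + ‖c (φ n) - z‖⁻¹ • (z - p))
      = ‖c (φ n) - p‖⁻¹ • (c (φ n) - p) := by
    filter_upwards [hφnorm.eventually_ge_atTop 1] with n hn
    have hpos : (0:ℝ) < ‖c (φ n) - z‖ := lt_of_lt_of_le one_pos hn
    have harg : u (φ n) + ‖c (φ n) - z‖⁻¹ • (z - p) = ‖c (φ n) - z‖⁻¹ • (c (φ n) - p) := by
      rw [hudef]; rw [← smul_add]; congr 1; abel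
    rw [harg, hgdef]
    simp only [norm_smul, norm_inv, norm_norm]
    rw [smul_smul]
    congr 1
    have hne : ‖c (φ n) - z‖ ≠ 0 := ne_of_gt hpos
    field_simp
  have hdir : Tendsto (fun n => ‖c (φ n) - p‖⁻¹ • (c (φ n) - p)) atTop (𝓝 v) :=
    hkey.congr' hid
  -- p + t • (direction n) is eventually in C
  have hpnorm : Tendsto (fun n => ‖c (φ n) - p‖) atTop atTop := by
    refine tendsto_atTop_mono' atTop ?_ (tendsto_atTop_add_const_right atTop (-‖z - p‖) hφnorm)
    filter_upwards with n
    have h1 : ‖c (φ n) - z‖ ≤ ‖c (φ n) - p‖ + ‖p - z‖ := by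
      have := norm_add_le (c (φ n) - p) (p - z)
      simpa [sub_add_sub_cancel] using this
    have h2 : ‖p - z‖ = ‖z - p‖ := norm_sub_rev _ _
    linarith
  have hmem : ∀ᶠ n in atTop, p + t • (‖c (φ n) - p‖⁻¹ • (c (φ n) - p)) ∈ C := by
    filter_upwards [hpnorm.eventually_ge_atTop (max 1 t)] with n hn
    have h1 : (1:ℝ) ≤ ‖c (φ n) - p‖ := le_trans (le_max_left _ _) hn
    have hpos : (0:ℝ) < ‖c (φ n) - p‖ := lt_of_lt_of_le one_pos h1
    set lam : ℝ := t / ‖c (φ n) - p‖ with hlam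
    have hlam0 : 0 ≤ lam := div_nonneg ht hpos.le
    have hlam1 : lam ≤ 1 := by
      rw [hlam, div_le_one hpos]; exact le_trans (le_max_right _ _) hn
    have hcomb := hconv hp (hc (φ n)) (by linarith : (0:ℝ) ≤ 1 - lam) hlam0 (by ring)
    have heq : (1 - lam) • p + lam • c (φ n)
        = p + t • (‖c (φ n) - p‖⁻¹ • (c (φ n) - p)) := by
      rw [smul_smul, hlam]
      have : t * ‖c (φ n) - p‖⁻¹ = t / ‖c (φ n) - p‖ := by ring
      rw [this]
      module
    rw [← heq]; exact hcomb
  have hlim : Tendsto (fun n => p + t • (‖c (φ n) - p‖⁻¹ • (c (φ n) - p))) atTop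
      (𝓝 (p + t • v)) :=
    tendsto_const_nhds.add ((tendsto_const_nhds.smul hdir))
  exact hclosed.mem_of_tendsto hlim hmem

end Aux

theorem stmt_9 {X : Type*} [NormedAddCommGroup X] [NormedSpace ℝ X]
    [FiniteDimensional ℝ X] (hd : 2 ≤ Module.finrank ℝ X)
    (C : Set X) (hclosed : IsClosed C) (hconv : Convex ℝ C) (hne : C ≠ Set.univ)
    (hint : (interior C).Nonempty) (hunb : ¬ Bornology.IsBounded C)
    (hnoasym : ∀ v : X, ¬ IsAsymptoticDir C v)
    (z : X) (hz : z ∉ C) :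
    (C ∩ frontier (vertexCone z C)).Nonempty ∧ Bornology.IsBounded (C ∩ frontier (vertexCone z C)) := by
  classical
  set K : Set X := vertexCone z C with hKdef
  obtain ⟨a, ha⟩ := hint
  have haC : a ∈ C := interior_subset ha
  have hCne : C.Nonempty := ⟨a, haC⟩
  obtain ⟨g, u₀, hgz, hgC⟩ := geometric_hahn_banach_point_closed hconv hclosed hz
  -- basic facts about the cone K
  have hCK : C ⊆ K := fun c hc => ⟨1, zero_le_one, c, hc, by simp⟩
  have hzK : z ∈ K := ⟨0, le_refl 0, a, haC, by simp⟩
  have hKg : K ⊆ {x | g z ≤ g x} := by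
    rintro x ⟨t, ht, c, hc, rfl⟩
    have h0 : 0 ≤ g (c - z) := by
      rw [map_sub]; have := hgC c hc; linarith
    have : g (z + t • (c - z)) = g z + t * g (c - z) := by
      rw [map_add, map_smul]; rfl
    simp only [mem_setOf_eq, this]
    nlinarith
  have hclK : closure K ⊆ {x | g z ≤ g x} :=
    closure_minimal hKg (isClosed_le continuous_const g.continuous)
  -- scaling invariance of K, its interior and frontier
  have hKscale : ∀ s : ℝ, 0 < s → ∀ x ∈ K, z + s • (x - z) ∈ K := by
    rintro s hs x ⟨t, ht, c, hc, rfl⟩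
    refine ⟨s * t, mul_nonneg hs.le ht, c, hc, ?_⟩
    rw [add_sub_cancel_left, smul_smul]
  have hEK : ∀ s : ℝ, 0 < s → (fun x => z + s • (x - z)) '' K = K := by
    intro s hs
    apply Set.Subset.antisymm
    · rintro _ ⟨x, hx, rfl⟩; exact hKscale s hs x hx
    · intro x hx
      refine ⟨z + s⁻¹ • (x - z), hKscale s⁻¹ (inv_pos.2 hs) x hx, ?_⟩
      show z + s • ((z + s⁻¹ • (x - z)) - z) = x
      rw [add_sub_cancel_left, smul_smul, mul_inv_cancel₀ (ne_of_gt hs), one_smul]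
      abel
  have hEfun : ∀ s : ℝ, (hs : s ≠ 0) → ∀ x : X,
      (((Homeomorph.subRight z).trans (Homeomorph.smulOfNeZero s hs)).trans
        (Homeomorph.addLeft z)) x = z + s • (x - z) := fun s hs x => rfl
  have hFscale : ∀ s : ℝ, 0 < s → ∀ x ∈ frontier K, z + s • (x - z) ∈ frontier K := by
    intro s hs x hx
    set e := ((Homeomorph.subRight z).trans (Homeomorph.smulOfNeZero s hs.ne')).trans
        (Homeomorph.addLeft z) with hedef
    have h1 : e '' frontier K = frontier K := by
      rw [Homeomorph.image_frontier]
      congr 1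
      have : ⇑e = fun x => z + s • (x - z) := funext (hEfun s hs.ne')
      rw [this, hEK s hs]
    rw [← h1]
    exact ⟨x, hx, hEfun s hs.ne' x⟩
  have hIscale : ∀ s : ℝ, 0 < s → ∀ x ∈ interior K, z + s • (x - z) ∈ interior K := by
    intro s hs x hx
    set e := ((Homeomorph.subRight z).trans (Homeomorph.smulOfNeZero s hs.ne')).trans
        (Homeomorph.addLeft z) with hedef
    have h1 : e '' interior K = interior K := by
      rw [Homeomorph.image_interior]
      congr 1
      have : ⇑e = fun x => z + s • (x - z) := funext (hEfun s hs.ne')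
      rw [this, hEK s hs]
    rw [← h1]
    exact ⟨x, hx, hEfun s hs.ne' x⟩
  -- rays from z in unit recession directions lie in the interior of K
  have hrecInt : ∀ v : X, ‖v‖ = 1 → (∀ p ∈ C, ∀ t : ℝ, 0 ≤ t → p + t • v ∈ C) →
      ∀ r : ℝ, 0 < r → z + r • v ∈ interior K := by
    intro v hv1 hrec r hr
    have hvne : v ≠ 0 := fun h => by simp [h] at hv1
    obtain ⟨t, ht, hmem⟩ := lemA C hnoasym hvne hrec ha z
    have htpos : 0 < t := by
      rcases eq_or_lt_of_le ht with h | h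
      · exfalso; apply hz; apply interior_subset
        rw [← h] at hmem; simpa using hmem
      · exact h
    have h1 : z + t • v ∈ interior K := interior_mono hCK hmem
    have h2 := hIscale (r / t) (by positivity) _ h1
    rw [add_sub_cancel_left, smul_smul, div_mul_cancel₀ r (ne_of_gt htpos)] at h2
    exact h2
  -- a frontier point of K different from z
  have hbad : ∃ x : X, g x < g z := by
    have hgc : 0 < g (a - z) := by
      rw [map_sub]; have := hgC a haC; linarith
    refine ⟨z - (g (a - z))⁻¹ • (a - z), ?_⟩
    rw [map_sub, map_smul]
    have : (g (a - z))⁻¹ * g (a - z) = 1 := inv_mul_cancel₀ (ne_of_gt hgc)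
    simp only [smul_eq_mul, this]
    linarith
  obtain ⟨xbad, hxbad⟩ := hbad
  have hxbadK : xbad ∉ closure K := fun h => absurd (hclK h) (not_le.2 hxbad)
  have hfront : ∃ w, w ∈ frontier K ∧ w ≠ z := by
    by_contra hcon
    push_neg at hcon
    have hconn : IsPreconnected ({z}ᶜ : Set X) := by
      have h1 : (1 : Cardinal) < Module.rank ℝ X := by
        rw [← Module.finrank_eq_rank]
        exact_mod_cast lt_of_lt_of_le one_lt_two (by exact_mod_cast hd)
      exact (isConnected_compl_singleton_of_one_lt_rank h1 z).isPreconnected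
    have hUopen : IsOpen (interior K ∩ {z}ᶜ) :=
      isOpen_interior.inter isOpen_compl_singleton
    have hVopen : IsOpen ((closure K)ᶜ) := isClosed_closure.isOpen_compl
    have hcover : ({z}ᶜ : Set X) ⊆ (interior K ∩ {z}ᶜ) ∪ (closure K)ᶜ := by
      intro x hx
      by_cases hcl : x ∈ closure K
      · left
        refine ⟨?_, hx⟩
        by_cases hintk : x ∈ interior K
        · exact hintk
        · exact absurd (hcon x ⟨hcl, hintk⟩) hx
      · right; exact hcl
    have hUne : (({z}ᶜ : Set X) ∩ (interior K ∩ {z}ᶜ)).Nonempty := by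
      have haz : a ≠ z := fun h => hz (h ▸ haC)
      exact ⟨a, haz, interior_mono hCK ha, haz⟩
    have hVne : (({z}ᶜ : Set X) ∩ (closure K)ᶜ).Nonempty := by
      have : xbad ≠ z := fun h => hxbadK (h ▸ subset_closure hzK)
      exact ⟨xbad, this, hxbadK⟩
    obtain ⟨p, _, ⟨hpint, _⟩, hpV⟩ := hconn _ _ hUopen hVopen hcover hUne hVne
    exact hpV (subset_closure (interior_subset hpint))
  obtain ⟨w, hwF, hwz⟩ := hfront
  have hRpos : (0:ℝ) < ‖w - z‖ := norm_sub_pos_iff.2 hwz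
  set R : ℝ := ‖w - z‖ with hRdef
  -- approximate w by a sequence in K
  obtain ⟨x, hxK, hxlim⟩ := mem_closure_iff_seq_limit.1 (frontier_subset_closure hwF)
  choose t ht c hcC hxeq using hxK
  have hxz : ∀ n, x n - z = t n • (c n - z) := by
    intro n; rw [hxeq n]; abel
  have hnormeq : ∀ n, ‖x n - z‖ = t n * ‖c n - z‖ := by
    intro n
    rw [hxz n, norm_smul, Real.norm_eq_abs, abs_of_nonneg (ht n)]
  have hrn : Tendsto (fun n => ‖x n - z‖) atTop (𝓝 R) :=
    ((hxlim.sub_const z).norm)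
  -- the key contradiction: an unbounded sequence of generators
  have hNotUnb : ∀ (q : ℕ → X), (∀ n, q n ∈ C) →
      Tendsto (fun n => ‖q n - z‖) atTop atTop →
      (∀ n, z + ‖q n - z‖⁻¹ • (q n - z) ∈ frontier K) → False := by
    intro q hq hqt hqF
    obtain ⟨v, hv1, hrec, φ, hφ, hφt⟩ := recOfUnbounded C hclosed hconv z q hq hqt
    have hlim : Tendsto (fun n => z + ‖q (φ n) - z‖⁻¹ • (q (φ n) - z)) atTop (𝓝 (z + v)) :=
      tendsto_const_nhds.add hφt
    have hzvF : z + v ∈ frontier K :=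
      isClosed_frontier.mem_of_tendsto hlim (Eventually.of_forall fun n => hqF (φ n))
    have hzvI : z + v ∈ interior K := by
      have := hrecInt v hv1 hrec 1 one_pos
      simpa using this
    exact hzvF.2 hzvI
  constructor
  · -- nonemptiness
    by_cases hub : Tendsto (fun n => ‖c n - z‖) atTop atTop
    · -- generators escape to infinity: contradiction via recession direction
      exfalso
      obtain ⟨v, hv1, hrec, φ, hφ, hφt⟩ := recOfUnbounded C hclosed hconv z c hcC hub
      have hR : Tendsto (fun n => ‖x (φ n) - z‖) atTop (𝓝 R) := hrn.comp hφ.tendsto_atTop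
      have h2 : Tendsto (fun n => ‖x (φ n) - z‖⁻¹ • (x (φ n) - z)) atTop
          (𝓝 (R⁻¹ • (w - z))) := by
        refine Tendsto.smul (hR.inv₀ (ne_of_gt hRpos)) ?_
        exact ((hxlim.comp hφ.tendsto_atTop).sub_const z)
      have heq : ∀ᶠ n in atTop, ‖x (φ n) - z‖⁻¹ • (x (φ n) - z)
          = ‖c (φ n) - z‖⁻¹ • (c (φ n) - z) := by
        have h3 : Tendsto (fun n => ‖c (φ n) - z‖) atTop atTop := hub.comp hφ.tendsto_atTop
        filter_upwards [h3.eventually_ge_atTop 1, hR.eventually (lt_mem_nhds (half_lt_self hRpos))]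
          with n hn hx2
        have hcpos : (0:ℝ) < ‖c (φ n) - z‖ := lt_of_lt_of_le one_pos hn
        have hxpos : (0:ℝ) < ‖x (φ n) - z‖ := lt_trans (half_pos hRpos) hx2
        have htpos : 0 < t (φ n) := by
          have := hnormeq (φ n)
          nlinarith [ht (φ n)]
        rw [hnormeq (φ n), hxz (φ n), smul_smul]
        congr 1
        rw [mul_inv, mul_comm, ← mul_assoc, mul_inv_cancel₀ (ne_of_gt htpos), one_mul]
      have h4 : Tendsto (fun n => ‖c (φ n) - z‖⁻¹ • (c (φ n) - z)) atTop
          (𝓝 (R⁻¹ • (w - z))) := h2.congr' heq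
      have hveq : v = R⁻¹ • (w - z) := tendsto_nhds_unique hφt h4
      have hIw : z + R • v ∈ interior K := hrecInt v hv1 hrec R hRpos
      rw [hveq, smul_smul, mul_inv_cancel₀ (ne_of_gt hRpos), one_smul] at hIw
      have hw' : z + (w - z) = w := by abel
      rw [hw'] at hIw
      exact hwF.2 hIw
    · -- generators have a bounded subsequence: produce the touching point
      rw [Filter.tendsto_atTop] at hub
      push_neg at hub
      obtain ⟨M, hM⟩ := hub
      have hfreq : ∃ᶠ n in atTop, c n ∈ Metric.closedBall z M := by
        apply hM.mono
        intro n hn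
        rw [Metric.mem_closedBall, dist_eq_norm]
        exact le_of_lt hn
      obtain ⟨cl, _, φ, hφ, hφt⟩ := (isCompact_closedBall z M).tendsto_subseq' hfreq
      have hclC : cl ∈ C := hclosed.mem_of_tendsto hφt (Eventually.of_forall fun n => hcC _)
      have hclz : cl ≠ z := fun h => hz (h ▸ hclC)
      have hcpos : (0:ℝ) < ‖cl - z‖ := norm_sub_pos_iff.2 hclz
      set tl : ℝ := R / ‖cl - z‖ with htl
      have htlpos : 0 < tl := div_pos hRpos hcpos
      have hnormc : Tendsto (fun n => ‖c (φ n) - z‖) atTop (𝓝 ‖cl - z‖) :=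
        (hφt.sub_const z).norm
      have hnx : Tendsto (fun n => ‖x (φ n) - z‖) atTop (𝓝 R) := hrn.comp hφ.tendsto_atTop
      have hdiv : Tendsto (fun n => ‖x (φ n) - z‖ / ‖c (φ n) - z‖) atTop (𝓝 tl) :=
        hnx.div hnormc (ne_of_gt hcpos)
      have hteq : ∀ᶠ n in atTop, t (φ n) = ‖x (φ n) - z‖ / ‖c (φ n) - z‖ := by
        filter_upwards [hnormc.eventually (lt_mem_nhds (half_lt_self hcpos))] with n hn
        have h0 : (0:ℝ) < ‖c (φ n) - z‖ := lt_trans (half_pos hcpos) hn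
        rw [hnormeq (φ n)]
        field_simp
      have htlim : Tendsto (fun n => t (φ n)) atTop (𝓝 tl) :=
        hdiv.congr' (hteq.mono fun n h => h.symm)
      have hlim2 : Tendsto (fun n => t (φ n) • (c (φ n) - z)) atTop (𝓝 (tl • (cl - z))) :=
        htlim.smul (hφt.sub_const z)
      have hlim1 : Tendsto (fun n => x (φ n) - z) atTop (𝓝 (w - z)) :=
        ((hxlim.comp hφ.tendsto_atTop).sub_const z)
      have hweq : w - z = tl • (cl - z) := by
        refine tendsto_nhds_unique ?_ hlim2
        exact hlim1.congr fun n => hxz (φ n)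
      have hcf : z + tl⁻¹ • (w - z) ∈ frontier K := hFscale tl⁻¹ (inv_pos.2 htlpos) w hwF
      have hceq : z + tl⁻¹ • (w - z) = cl := by
        rw [hweq, smul_smul, inv_mul_cancel₀ (ne_of_gt htlpos), one_smul]; abel
      rw [hceq] at hcf
      exact ⟨cl, hclC, hcf⟩
  · -- boundedness
    by_contra hbd
    rw [isBounded_iff_forall_norm_le] at hbd
    push_neg at hbd
    have hex : ∀ n : ℕ, ∃ p, p ∈ C ∩ frontier K ∧ (n:ℝ) + ‖z‖ < ‖p‖ := by
      intro n; obtain ⟨p, hp, hnp⟩ := hbd ((n:ℝ) + ‖z‖); exact ⟨p, hp, hnp⟩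
    choose q hq hqn using hex
    have hqC : ∀ n, q n ∈ C := fun n => (hq n).1
    have hqF : ∀ n, q n ∈ frontier K := fun n => (hq n).2
    have hqz : ∀ n, (0:ℝ) < ‖q n - z‖ :=
      fun n => norm_sub_pos_iff.2 (fun h => hz (h ▸ hqC n))
    have hqt : Tendsto (fun n => ‖q n - z‖) atTop atTop := by
      refine tendsto_atTop_mono' atTop ?_ tendsto_natCast_atTop_atTop
      filter_upwards with n
      have h1 : ‖q n‖ - ‖z‖ ≤ ‖q n - z‖ := norm_sub_norm_le _ _
      have h2 := hqn n
      linarith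
    exact hNotUnb q hqC hqt
      (fun n => hFscale (‖q n - z‖⁻¹) (inv_pos.2 (hqz n)) (q n) (hqF n))
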